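/- arXiv:1001.5103 — 7 statements merged into one kernel-verified Lean document; each statement's English description precedes it below -/
import Mathlib

section
/- For fixed z in R^d, the function beta -> V_beta(z) = beta * ln(sum_{i=1}^d cosh(z_i/beta)) - beta * ln(d) is nonincreasing in beta on (0, infinity); i.e., if 0 < beta_1 <= beta_2 then V_{beta_1}(z) >= V_{beta_2}(z). -/
noncomputable def Vb {d : ℕ} (β : ℝ) (z : Fin d → ℝ) : ℝ :=
  β * Real.log (∑ i, Real.cosh (z i / β)) - β * Real.log d

open Real Finset in
lemma cosh_rpow_aux {s : ℝ} (hs0 : 0 ≤ s) (hs1 : s ≤ 1) (x : ℝ) :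
    Real.cosh (s * x) ≤ Real.cosh x ^ s := by
  have hc := (Real.concaveOn_rpow hs0 hs1).2 (x := Real.exp x) (y := Real.exp (-x))
    (Set.mem_Ici.2 (Real.exp_nonneg _)) (Set.mem_Ici.2 (Real.exp_nonneg _))
    (by norm_num : (0:ℝ) ≤ 1/2) (by norm_num : (0:ℝ) ≤ 1/2)
    (by norm_num : (1:ℝ)/2 + 1/2 = 1)
  simp only [smul_eq_mul] at hc
  have h1 : Real.exp x ^ s = Real.exp (s * x) := by
    rw [Real.rpow_def_of_pos (Real.exp_pos x), Real.log_exp, mul_comm]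
  have h2 : Real.exp (-x) ^ s = Real.exp (-(s * x)) := by
    rw [Real.rpow_def_of_pos (Real.exp_pos (-x)), Real.log_exp]; ring_nf
  rw [h1, h2] at hc
  rw [Real.cosh_eq, Real.cosh_eq]
  calc (Real.exp (s*x) + Real.exp (-(s*x)))/2
      = 1/2 * Real.exp (s*x) + 1/2 * Real.exp (-(s*x)) := by ring
    _ ≤ (1/2 * Real.exp x + 1/2 * Real.exp (-x)) ^ s := hc
    _ = ((Real.exp x + Real.exp (-x))/2) ^ s := by ring_nf

/-- `β ↦ V_β(z)` is nonincreasing on `(0,∞)`. -/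
theorem stmt1 (d : ℕ) (hd : 1 ≤ d) (z : Fin d → ℝ) (β₁ β₂ : ℝ)
    (h1 : 0 < β₁) (h12 : β₁ ≤ β₂) : Vb β₂ z ≤ Vb β₁ z := by
  have h2 : 0 < β₂ := lt_of_lt_of_le h1 h12
  set s : ℝ := β₁ / β₂ with hs
  have hs0 : 0 < s := div_pos h1 h2
  have hs1 : s ≤ 1 := (div_le_one h2).2 h12
  have hdpos : (0 : ℝ) < d := by exact_mod_cast hd
  set A : ℝ := (∑ i, Real.cosh (z i / β₁)) / d with hA
  set B : ℝ := (∑ i, Real.cosh (z i / β₂)) / d with hB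
  -- each cosh ≥ 1 so sums ≥ d
  have hsum1 : (d : ℝ) ≤ ∑ i, Real.cosh (z i / β₁) := by
    calc (d : ℝ) = ∑ _i : Fin d, (1 : ℝ) := by simp
      _ ≤ _ := Finset.sum_le_sum fun i _ => Real.one_le_cosh _
  have hsum2 : (d : ℝ) ≤ ∑ i, Real.cosh (z i / β₂) := by
    calc (d : ℝ) = ∑ _i : Fin d, (1 : ℝ) := by simp
      _ ≤ _ := Finset.sum_le_sum fun i _ => Real.one_le_cosh _
  have hA1 : 1 ≤ A := (one_le_div hdpos).2 hsum1
  have hB1 : 1 ≤ B := (one_le_div hdpos).2 hsum2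
  -- key inequality: B ≤ A ^ s
  have hkey : B ≤ A ^ s := by
    have hpt : ∀ i : Fin d, Real.cosh (z i / β₂) ≤ Real.cosh (z i / β₁) ^ s := by
      intro i
      have : z i / β₂ = s * (z i / β₁) := by
        rw [hs]; field_simp
      rw [this]
      exact cosh_rpow_aux hs0.le hs1 _
    have hjensen : (∑ i : Fin d, (1/(d:ℝ)) * Real.cosh (z i / β₁) ^ s)
        ≤ (∑ i : Fin d, (1/(d:ℝ)) * Real.cosh (z i / β₁)) ^ s := by
      have := (Real.concaveOn_rpow hs0.le hs1).le_map_sum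
        (t := Finset.univ) (w := fun _ : Fin d => 1/(d:ℝ))
        (p := fun i => Real.cosh (z i / β₁))
        (fun i _ => by positivity)
        (by simp; field_simp)
        (fun i _ => Set.mem_Ici.2 (by positivity))
      simpa using this
    calc B = ∑ i : Fin d, (1/(d:ℝ)) * Real.cosh (z i / β₂) := by
            rw [hB, Finset.sum_div]; exact Finset.sum_congr rfl fun i _ => by ring
      _ ≤ ∑ i : Fin d, (1/(d:ℝ)) * Real.cosh (z i / β₁) ^ s :=
            Finset.sum_le_sum fun i _ => by
              have := hpt i
              have hd' : (0:ℝ) ≤ 1/(d:ℝ) := by positivity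
              exact mul_le_mul_of_nonneg_left this hd'
      _ ≤ (∑ i : Fin d, (1/(d:ℝ)) * Real.cosh (z i / β₁)) ^ s := hjensen
      _ = A ^ s := by
            congr 1
            rw [hA, Finset.sum_div]; exact Finset.sum_congr rfl fun i _ => by ring
  -- rewrite Vb in terms of A, B
  have hVb1 : Vb β₁ z = β₁ * Real.log A := by
    rw [Vb, hA, Real.log_div (ne_of_gt (lt_of_lt_of_le hdpos hsum1)) (ne_of_gt hdpos)]; ring
  have hVb2 : Vb β₂ z = β₂ * Real.log B := by
    rw [Vb, hB, Real.log_div (ne_of_gt (lt_of_lt_of_le hdpos hsum2)) (ne_of_gt hdpos)]; ring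
  rw [hVb1, hVb2]
  have hlog : Real.log B ≤ Real.log (A ^ s) :=
    Real.log_le_log (by positivity) hkey
  calc β₂ * Real.log B ≤ β₂ * Real.log (A ^ s) :=
        mul_le_mul_of_nonneg_left hlog h2.le
    _ = β₂ * (s * Real.log A) := by rw [Real.log_rpow (by positivity)]
    _ = β₁ * Real.log A := by rw [hs]; field_simp
end

section
/- For V_beta with beta > 0, the directional second derivative satisfies (d^2/dt^2)|_{t=0} V_beta(x + t h) <= ||h||_inf^2 / beta for all x, h in R^d. Equivalently, the Hessian quadratic form of V_beta at any point, evaluated at h, is at most ||h||_inf^2 / beta. -/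
/-- The directional second derivative of `V_β` at `x` in direction `h`, which equals
`(1/β)[(∑ᵢ cosh(xᵢ/β) hᵢ²)/(∑ᵢ cosh(xᵢ/β)) - ((∑ᵢ sinh(xᵢ/β) hᵢ)/(∑ᵢ cosh(xᵢ/β)))²]`,
is at most `‖h‖_∞² / β`. -/
theorem stmt4 (d : ℕ) (hd : 1 ≤ d) (β : ℝ) (hβ : 0 < β) (x h : Fin d → ℝ) :
    (1 / β) * ((∑ i, Real.cosh (x i / β) * (h i) ^ 2) / (∑ i, Real.cosh (x i / β))
      - ((∑ i, Real.sinh (x i / β) * h i) / (∑ i, Real.cosh (x i / β))) ^ 2)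
    ≤ ‖h‖ ^ 2 / β := by
  have hS : (0:ℝ) < ∑ i, Real.cosh (x i / β) := by
    have : (0:ℝ) < ∑ _i : Fin d, (1:ℝ) := by
      simp [Finset.card_univ]; omega
    refine lt_of_lt_of_le this (Finset.sum_le_sum fun i _ => Real.one_le_cosh _)
  have hA : (∑ i, Real.cosh (x i / β) * (h i) ^ 2)
      ≤ (∑ i, Real.cosh (x i / β)) * ‖h‖ ^ 2 := by
    rw [Finset.sum_mul]
    refine Finset.sum_le_sum fun i _ => ?_
    have h1 : (h i) ^ 2 ≤ ‖h‖ ^ 2 := by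
      have := norm_le_pi_norm h i
      calc (h i)^2 = ‖h i‖^2 := by rw [Real.norm_eq_abs, sq_abs]
        _ ≤ ‖h‖^2 := pow_le_pow_left₀ (norm_nonneg _) this 2
    exact mul_le_mul_of_nonneg_left h1 (Real.cosh_pos _).le
  have key : (∑ i, Real.cosh (x i / β) * (h i) ^ 2) / (∑ i, Real.cosh (x i / β))
      - ((∑ i, Real.sinh (x i / β) * h i) / (∑ i, Real.cosh (x i / β))) ^ 2
      ≤ ‖h‖ ^ 2 := by
    have h2 : (∑ i, Real.cosh (x i / β) * (h i) ^ 2) / (∑ i, Real.cosh (x i / β))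
        ≤ ‖h‖ ^ 2 := by
      rw [div_le_iff₀ hS]; linarith [hA]
    nlinarith [sq_nonneg ((∑ i, Real.sinh (x i / β) * h i) / (∑ i, Real.cosh (x i / β)))]
  rw [div_eq_mul_one_div (‖h‖^2) β, mul_comm]
  exact mul_le_mul_of_nonneg_right key (by positivity)
end

section
/- For any x, h in R^d and beta > 0, V_beta(x + h) <= V_beta(x) + <grad V_beta(x), h> + ||h||_inf^2 / (2 beta). -/
open Real

-- Hoeffding core: (1-p) + p e^s ≤ exp(p s + s²/8) for p∈[0,1], s ≥ 0
lemma hoeffA (p s : ℝ) (hp0 : 0 ≤ p) (hp1 : p ≤ 1) (hs : 0 ≤ s) :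
    (1 - p) + p * Real.exp s ≤ Real.exp (p * s + s ^ 2 / 8) := by
  set c : ℝ → ℝ := fun u => (1 - p) + p * Real.exp u with hc
  have hcpos : ∀ u, 0 < c u := by
    intro u
    have := Real.exp_pos u
    rcases eq_or_lt_of_le hp0 with h0 | h0
    · simp [hc, ← h0]
    · simp only [hc]; nlinarith
  set f : ℝ → ℝ := fun u => p * u + u ^ 2 / 8 - Real.log (c u) with hf
  set f1 : ℝ → ℝ := fun u => p + u / 4 - p * Real.exp u / c u with hf1
  have hderiv : ∀ u, HasDerivAt f (f1 u) u := by
    intro u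
    have h1 : HasDerivAt c (p * Real.exp u) u :=
      ((Real.hasDerivAt_exp u).const_mul p).const_add (1 - p)
    have h2 : HasDerivAt (fun v => Real.log (c v)) (p * Real.exp u / c u) u :=
      h1.log (ne_of_gt (hcpos u))
    have h3 : HasDerivAt (fun v : ℝ => p * v + v ^ 2 / 8) (p + 2 * u / 8) u := by
      have := ((hasDerivAt_id u).const_mul p).add
        (((hasDerivAt_pow 2 u)).div_const 8)
      refine this.congr_deriv ?_
      simp
    have := h3.sub h2
    refine this.congr_deriv ?_
    simp [hf1]; ring
  have hderiv1 : ∀ u, HasDerivAt f1 (1 / 4 - p * (1 - p) * Real.exp u / (c u) ^ 2) u := by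
    intro u
    have hcd : HasDerivAt c (p * Real.exp u) u :=
      ((Real.hasDerivAt_exp u).const_mul p).const_add (1 - p)
    have hn : HasDerivAt (fun v => p * Real.exp v) (p * Real.exp u) u :=
      (Real.hasDerivAt_exp u).const_mul p
    have hq : HasDerivAt (fun v => p * Real.exp v / c v)
        ((p * Real.exp u * c u - p * Real.exp u * (p * Real.exp u)) / (c u) ^ 2) u :=
      hn.div hcd (ne_of_gt (hcpos u))
    have h3 : HasDerivAt (fun v : ℝ => p + v / 4) (1 / 4) u := by
      simpa using (hasDerivAt_id u).div_const 4 |>.const_add p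
    have := h3.sub hq
    refine this.congr_deriv ?_
    have := hcpos u
    field_simp [hc]
    ring
  -- f1 is monotone
  have hf1mono : Monotone f1 := by
    apply monotone_of_deriv_nonneg
    · exact fun u => (hderiv1 u).differentiableAt
    · intro u
      rw [(hderiv1 u).deriv]
      have h1 := hcpos u
      have h2 : (c u) ^ 2 ≥ 4 * (p * (1 - p) * Real.exp u) := by
        have hE := Real.exp_pos u
        have : ((1 - p) - p * Real.exp u) ^ 2 ≥ 0 := sq_nonneg _
        simp only [hc]
        nlinarith
      have h3 : p * (1 - p) * Real.exp u / (c u) ^ 2 ≤ 1 / 4 := by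
        rw [div_le_iff₀ (by positivity)]
        set X := p * (1 - p) * Real.exp u
        set Y := (c u) ^ 2
        linarith
      linarith
  have hf10 : f1 0 = 0 := by simp [hf1, hc]
  have hf1nonneg : ∀ u, 0 ≤ u → 0 ≤ f1 u := fun u hu => hf10 ▸ hf1mono hu
  -- f is monotone on [0,∞)
  have hfmono : MonotoneOn f (Set.Ici 0) := by
    apply monotoneOn_of_deriv_nonneg (convex_Ici 0)
    · exact fun u _ => (hderiv u).differentiableAt.continuousAt.continuousWithinAt
    · intro u hu
      exact ((hderiv u).differentiableAt).differentiableWithinAt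
    · intro u hu
      rw [(hderiv u).deriv]
      exact hf1nonneg u (le_of_lt (by simpa using hu))
  have hf0 : f 0 = 0 := by simp [hf, hc]
  have hfs : 0 ≤ f s := hf0 ▸ hfmono (Set.mem_Ici.2 le_rfl) (Set.mem_Ici.2 hs) hs
  have : Real.log (c s) ≤ p * s + s ^ 2 / 8 := by simp [hf] at hfs; linarith
  exact (Real.log_le_iff_le_exp (hcpos s)).mp this

-- Hoeffding's lemma form: cosh T + m sinh T ≤ exp(mT + T²/2) for |m| ≤ 1, T ≥ 0
lemma hoeffB (m T : ℝ) (hm : |m| ≤ 1) (hT : 0 ≤ T) :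
    Real.cosh T + m * Real.sinh T ≤ Real.exp (m * T + T ^ 2 / 2) := by
  obtain ⟨hm1, hm2⟩ := abs_le.mp hm
  set p := (1 + m) / 2 with hp
  have hA := hoeffA p (2 * T) (by linarith) (by linarith) (by linarith)
  have hid : Real.cosh T + m * Real.sinh T
      = Real.exp (-T) * ((1 - p) + p * Real.exp (2 * T)) := by
    rw [Real.cosh_eq, Real.sinh_eq, Real.exp_neg]
    have h2 : Real.exp (2 * T) = Real.exp T * Real.exp T := by
      rw [← Real.exp_add]; ring_nf
    have hE := Real.exp_pos T
    rw [h2]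
    field_simp
    ring
  rw [hid]
  calc Real.exp (-T) * ((1 - p) + p * Real.exp (2 * T))
      ≤ Real.exp (-T) * Real.exp (p * (2 * T) + (2 * T) ^ 2 / 8) := by
        apply mul_le_mul_of_nonneg_left hA (le_of_lt (Real.exp_pos _))
    _ = Real.exp (m * T + T ^ 2 / 2) := by
        rw [← Real.exp_add]
        congr 1
        rw [hp]; ring

-- convexity bound: e^t ≤ cosh T + (t/T) sinh T for |t| ≤ T, T > 0
lemma convC (t T : ℝ) (hT : 0 < T) (ht : |t| ≤ T) :
    Real.exp t ≤ Real.cosh T + (t / T) * Real.sinh T := by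
  obtain ⟨h1, h2⟩ := abs_le.mp ht
  have ha : (0:ℝ) ≤ (T + t) / (2 * T) := by
    apply div_nonneg (by linarith) (by linarith)
  have hb : (0:ℝ) ≤ (T - t) / (2 * T) := by
    apply div_nonneg (by linarith) (by linarith)
  have hab : (T + t) / (2 * T) + (T - t) / (2 * T) = 1 := by
    field_simp; ring
  have hconv := convexOn_exp.2 (Set.mem_univ T) (Set.mem_univ (-T)) ha hb hab
  simp only [smul_eq_mul] at hconv
  have hpt : (T + t) / (2 * T) * T + (T - t) / (2 * T) * (-T) = t := by
    field_simp
    ring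
  rw [hpt] at hconv
  calc Real.exp t ≤ (T + t) / (2 * T) * Real.exp T + (T - t) / (2 * T) * Real.exp (-T) := hconv
    _ = Real.cosh T + (t / T) * Real.sinh T := by
        rw [Real.cosh_eq, Real.sinh_eq]
        field_simp
        ring

/-- `V_β(x+h) ≤ V_β(x) + ⟨∇V_β(x), h⟩ + ‖h‖_∞²/(2β)`, where the gradient of `V_β`
at `x` has `i`-th component `sinh(xᵢ/β)/∑ⱼ cosh(xⱼ/β)`. -/
theorem stmt5 (d : ℕ) (hd : 1 ≤ d) (β : ℝ) (hβ : 0 < β) (x h : Fin d → ℝ) :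
    Vb β (x + h) ≤ Vb β x
      + (∑ i, (Real.sinh (x i / β) / ∑ j, Real.cosh (x j / β)) * h i)
      + ‖h‖ ^ 2 / (2 * β) := by
  haveI : Nonempty (Fin d) := Fin.pos_iff_nonempty.mp hd
  by_cases hh : h = 0
  · subst hh
    simp only [add_zero, Pi.zero_apply, mul_zero, Finset.sum_const_zero, norm_zero]
    norm_num
  have hβ' : β ≠ 0 := ne_of_gt hβ
  set T : ℝ := ‖h‖ / β with hTdef
  have hT : 0 < T := div_pos (norm_pos_iff.mpr hh) hβ
  have hti : ∀ i, |h i / β| ≤ T := by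
    intro i
    rw [hTdef, abs_div, abs_of_pos hβ]
    have := norm_le_pi_norm h i
    rw [Real.norm_eq_abs] at this
    gcongr
  set C := ∑ j, Real.cosh (x j / β) with hCdef
  have hCpos : 0 < C := Finset.sum_pos (fun i _ => Real.cosh_pos _) Finset.univ_nonempty
  set M := ∑ i, Real.sinh (x i / β) * (h i / β) with hMdef
  have hM : |M| ≤ C * T := by
    calc |M| ≤ ∑ i, |Real.sinh (x i / β) * (h i / β)| := Finset.abs_sum_le_sum_abs _ _
      _ ≤ ∑ i, Real.cosh (x i / β) * T := by
          apply Finset.sum_le_sum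
          intro i _
          rw [abs_mul]
          apply mul_le_mul ?_ (hti i) (abs_nonneg _) (le_of_lt (Real.cosh_pos _))
          have h1 := Real.cosh_sq (x i / β)
          have h2 := Real.cosh_pos (x i / β)
          rw [abs_le]
          constructor <;> nlinarith
      _ = C * T := by rw [← Finset.sum_mul]
  set m := M / (C * T) with hmdef
  have hm1 : |m| ≤ 1 := by
    rw [hmdef, abs_div, div_le_one (by rw [abs_of_pos (mul_pos hCpos hT)]; positivity)]
    rw [abs_of_pos (mul_pos hCpos hT)]
    exact hM
  set S := ∑ i, Real.cosh (x i / β + h i / β) with hSdef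
  have hSpos : 0 < S := Finset.sum_pos (fun i _ => Real.cosh_pos _) Finset.univ_nonempty
  have hkey : S ≤ C * (Real.cosh T + m * Real.sinh T) := by
    have hper : ∀ i, Real.cosh (x i / β + h i / β) ≤
        Real.cosh (x i / β) * Real.cosh T
          + Real.sinh (x i / β) * (h i / β) * (Real.sinh T / T) := by
      intro i
      set a := x i / β
      set t := h i / β
      have e1 := convC t T hT (hti i)
      have e2 := convC (-t) T hT (by rw [abs_neg]; exact hti i)
      calc Real.cosh (a + t)
          = (Real.exp a * Real.exp t + Real.exp (-a) * Real.exp (-t)) / 2 := by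
            rw [Real.cosh_eq, ← Real.exp_add, ← Real.exp_add, neg_add]
        _ ≤ (Real.exp a * (Real.cosh T + (t / T) * Real.sinh T)
              + Real.exp (-a) * (Real.cosh T + (-t / T) * Real.sinh T)) / 2 := by
            have g1 := mul_le_mul_of_nonneg_left e1 (Real.exp_pos a).le
            have g2 := mul_le_mul_of_nonneg_left e2 (Real.exp_pos (-a)).le
            linarith
        _ = Real.cosh a * Real.cosh T + Real.sinh a * t * (Real.sinh T / T) := by
            simp only [Real.cosh_eq, Real.sinh_eq]
            field_simp
            ring
    calc S ≤ ∑ i, (Real.cosh (x i / β) * Real.cosh T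
            + Real.sinh (x i / β) * (h i / β) * (Real.sinh T / T)) :=
          Finset.sum_le_sum (fun i _ => hper i)
      _ = C * Real.cosh T + M * (Real.sinh T / T) := by
          rw [Finset.sum_add_distrib, ← Finset.sum_mul, ← Finset.sum_mul]
      _ = C * (Real.cosh T + m * Real.sinh T) := by
          rw [hmdef]
          field_simp
  have hlog : Real.log S ≤ Real.log C + (m * T + T ^ 2 / 2) := by
    calc Real.log S ≤ Real.log (C * Real.exp (m * T + T ^ 2 / 2)) := by
          apply Real.log_le_log hSpos
          calc S ≤ C * (Real.cosh T + m * Real.sinh T) := hkey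
            _ ≤ C * Real.exp (m * T + T ^ 2 / 2) :=
                mul_le_mul_of_nonneg_left (hoeffB m T hm1 hT.le) hCpos.le
      _ = Real.log C + (m * T + T ^ 2 / 2) := by
          rw [Real.log_mul (ne_of_gt hCpos) (Real.exp_ne_zero _), Real.log_exp]
  have hfin : β * Real.log S ≤ β * Real.log C + β * (m * T) + β * (T ^ 2 / 2) := by
    nlinarith [mul_le_mul_of_nonneg_left hlog hβ.le]
  have hβmT : β * (m * T) = ∑ i, (Real.sinh (x i / β) / C) * h i := by
    have h1 : β * M = ∑ i, Real.sinh (x i / β) * h i := by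
      rw [hMdef, Finset.mul_sum]
      apply Finset.sum_congr rfl
      intro i _
      field_simp
    have h2 : ∑ i, (Real.sinh (x i / β) / C) * h i = (β * M) / C := by
      rw [h1, Finset.sum_div]
      apply Finset.sum_congr rfl
      intro i _
      ring
    rw [h2, hmdef]
    field_simp
  have hβT2 : β * (T ^ 2 / 2) = ‖h‖ ^ 2 / (2 * β) := by
    rw [hTdef]
    field_simp
  have hSx : (∑ i, Real.cosh ((x + h) i / β)) = S := by
    apply Finset.sum_congr rfl
    intro i _
    rw [Pi.add_apply, add_div]
  simp only [Vb, hSx, ← hCdef]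
  rw [← hβmT, ← hβT2]
  linarith
end

section
/- Let Xi_1, ..., Xi_k be i.i.d. random n-by-n matrices with ||Xi_l||_inf <= L almost surely and E[Xi_l] = W, and let W_k = (1/k) sum_{l=1}^k Xi_l. Then E[||W_k - W||_inf] <= 2 L k^{-1/2} sqrt(2 ln(2 n^2)). -/
open MeasureTheory ProbabilityTheory

section aux
variable {Ω : Type*} [MeasurableSpace Ω] {μ : Measure Ω} [IsProbabilityMeasure μ]

/-- Hoeffding-type mgf bound via cosh. -/
lemma aux_mgf_le {X : Ω → ℝ} (hX : Measurable X) {c : ℝ} (hc : 0 < c)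
    (hb : ∀ᵐ ω ∂μ, |X ω| ≤ c) (hzero : ∫ ω, X ω ∂μ = 0) (t : ℝ) :
    ∫ ω, Real.exp (t * X ω) ∂μ ≤ Real.exp (t ^ 2 * c ^ 2 / 2) := by
  have hXint : Integrable X μ := by
    refine (integrable_const c).mono' hX.aestronglyMeasurable ?_
    filter_upwards [hb] with ω h using by simpa using h
  have hpt : ∀ᵐ ω ∂μ, Real.exp (t * X ω) ≤
      Real.cosh (t * c) + (X ω / c) * Real.sinh (t * c) := by
    filter_upwards [hb] with ω h
    set x := X ω with hx
    have h1 : -c ≤ x := neg_le_of_abs_le h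
    have h2 : x ≤ c := le_of_abs_le h
    have hl : 0 ≤ (c + x) / (2 * c) := div_nonneg (by linarith) (by positivity)
    have hm : 0 ≤ (c - x) / (2 * c) := by
      apply div_nonneg (by linarith) (by positivity)
    have hsum : (c + x) / (2 * c) + (c - x) / (2 * c) = 1 := by field_simp; ring
    have hcvx := convexOn_exp.2 (Set.mem_univ (t * c)) (Set.mem_univ (-(t * c))) hl hm hsum
    simp only [smul_eq_mul] at hcvx
    have harg : (c + x) / (2 * c) * (t * c) + (c - x) / (2 * c) * (-(t * c)) = t * x := by
      field_simp
      ring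
    rw [harg] at hcvx
    refine hcvx.trans_eq ?_
    rw [Real.cosh_eq, Real.sinh_eq]
    field_simp
    ring
  have hint1 : Integrable (fun ω => Real.exp (t * X ω)) μ := by
    refine (integrable_const (Real.exp (|t| * c))).mono'
      (hX.const_mul t).exp.aestronglyMeasurable ?_
    filter_upwards [hb] with ω h
    rw [Real.norm_eq_abs, abs_of_pos (Real.exp_pos _), Real.exp_le_exp]
    calc t * X ω ≤ |t * X ω| := le_abs_self _
      _ = |t| * |X ω| := abs_mul _ _
      _ ≤ |t| * c := mul_le_mul_of_nonneg_left h (abs_nonneg t)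
  have hint2 : Integrable (fun ω => Real.cosh (t * c) + X ω / c * Real.sinh (t * c)) μ :=
    (integrable_const _).add ((hXint.div_const c).mul_const _)
  have hle := integral_mono_ae hint1 hint2 hpt
  have heq : ∫ ω, (Real.cosh (t * c) + X ω / c * Real.sinh (t * c)) ∂μ
      = Real.cosh (t * c) := by
    rw [integral_add (integrable_const _) ((hXint.div_const c).mul_const _),
      integral_const, integral_mul_const, integral_div, hzero]
    simp
  rw [heq] at hle
  refine hle.trans ?_
  calc Real.cosh (t * c) ≤ Real.exp ((t * c) ^ 2 / 2) := Real.cosh_le_exp_half_sq _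
    _ = Real.exp (t ^ 2 * c ^ 2 / 2) := by rw [mul_pow]

end aux

/-- If `Ξ₁,…,Ξ_k` are i.i.d. random `n×n` matrices (encoded as `Fin n → Fin n → ℝ`, whose
norm is the entrywise sup norm) with `‖Ξ_ℓ‖_∞ ≤ L` a.s. and entrywise mean `W`, then
`W_k = (1/k) ∑_ℓ Ξ_ℓ` satisfies `E[‖W_k - W‖_∞] ≤ 2 L k^{-1/2} √(2 ln(2n²))`. -/
theorem stmt8 (n : ℕ) (hn : 1 ≤ n) (k : ℕ) (hk : 1 ≤ k)
    {Ω : Type*} [MeasurableSpace Ω] (μ : Measure Ω) [IsProbabilityMeasure μ]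
    (Ξ : Fin k → Ω → (Fin n → Fin n → ℝ)) (L : ℝ)
    (hmeas : ∀ ℓ, Measurable (Ξ ℓ))
    (hindep : iIndepFun Ξ μ)
    (hident : ∀ ℓ, Measure.map (Ξ ℓ) μ = Measure.map (Ξ ⟨0, hk⟩) μ)
    (hbound : ∀ ℓ, ∀ᵐ ω ∂μ, ‖Ξ ℓ ω‖ ≤ L)
    (W : Fin n → Fin n → ℝ)
    (hmean : ∀ ℓ a b, ∫ ω, Ξ ℓ ω a b ∂μ = W a b) :
    ∫ ω, ‖(k : ℝ)⁻¹ • ∑ ℓ, Ξ ℓ ω - W‖ ∂μ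
      ≤ 2 * L * (k : ℝ) ^ (-(1 : ℝ) / 2) * Real.sqrt (2 * Real.log (2 * n ^ 2)) := by
  classical
  have hk0 : (0:ℝ) < k := by exact_mod_cast hk
  have hμne : μ ≠ 0 := IsProbabilityMeasure.ne_zero μ
  haveI : (ae μ).NeBot := ae_neBot.mpr hμne
  have hbAll : ∀ᵐ ω ∂μ, ∀ ℓ, ‖Ξ ℓ ω‖ ≤ L := ae_all_iff.mpr hbound
  have hL0 : 0 ≤ L := by
    obtain ⟨ω, hω⟩ := (hbound ⟨0, hk⟩).exists
    exact (norm_nonneg _).trans hω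
  have hentry : ∀ (M : Fin n → Fin n → ℝ) (a b : Fin n), |M a b| ≤ ‖M‖ := fun M a b => by
    rw [← Real.norm_eq_abs]
    exact (norm_le_pi_norm (M a) b).trans (norm_le_pi_norm M a)
  have hEmeas : ∀ ℓ (a b : Fin n), Measurable (fun ω => Ξ ℓ ω a b) := fun ℓ a b =>
    (measurable_pi_apply b).comp ((measurable_pi_apply a).comp (hmeas ℓ))
  have hEint : ∀ ℓ (a b : Fin n), Integrable (fun ω => Ξ ℓ ω a b) μ := by
    intro ℓ a b
    refine (integrable_const L).mono' (hEmeas ℓ a b).aestronglyMeasurable ?_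
    filter_upwards [hbound ℓ] with ω h
    exact (Real.norm_eq_abs _ ▸ hentry (Ξ ℓ ω) a b).trans h
  have hWb : ∀ a b, |W a b| ≤ L := by
    intro a b
    rw [← hmean ⟨0, hk⟩ a b, ← Real.norm_eq_abs]
    have := norm_integral_le_of_norm_le_const (μ := μ)
      (f := fun ω => Ξ ⟨0, hk⟩ ω a b) (C := L) ?_
    · simpa using this
    · filter_upwards [hbound ⟨0, hk⟩] with ω h
      exact (Real.norm_eq_abs _ ▸ hentry (Ξ ⟨0, hk⟩ ω) a b).trans h
  rcases hL0.eq_or_lt with hLz | hLpos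
  · -- degenerate case L = 0
    have hW0 : W = 0 := by
      funext a b
      have h := hWb a b
      rw [← hLz] at h
      simpa using abs_eq_zero.mp (le_antisymm h (abs_nonneg _))
    have hz : (fun ω => ‖(k:ℝ)⁻¹ • ∑ ℓ, Ξ ℓ ω - W‖) =ᵐ[μ] fun _ => (0:ℝ) := by
      filter_upwards [hbAll] with ω h
      have hΞ0 : ∀ ℓ, Ξ ℓ ω = 0 := fun ℓ => by
        have h2 := h ℓ; rw [← hLz] at h2; exact norm_le_zero_iff.mp h2
      simp [hΞ0, hW0]
    rw [integral_congr_ae hz, integral_zero, ← hLz]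
    simp
  -- main case L > 0
  set lg : ℝ := Real.log (2 * (n:ℝ) ^ 2) with hlg_def
  have hn1 : (1:ℝ) ≤ (n:ℝ) := by exact_mod_cast hn
  have hlg : 0 < lg := Real.log_pos (by nlinarith)
  have hsk : (0:ℝ) < Real.sqrt k := Real.sqrt_pos.mpr hk0
  have hs2 : (0:ℝ) < Real.sqrt 2 := by positivity
  have hsl : (0:ℝ) < Real.sqrt lg := Real.sqrt_pos.mpr hlg
  set t : ℝ := Real.sqrt lg / (Real.sqrt 2 * Real.sqrt k * L) with ht_def
  have ht : 0 < t := by positivity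
  have hs2sq : Real.sqrt 2 ^ 2 = 2 := Real.sq_sqrt (by norm_num)
  have hsksq : Real.sqrt k ^ 2 = (k:ℝ) := Real.sq_sqrt hk0.le
  have hslsq : Real.sqrt lg ^ 2 = lg := Real.sq_sqrt hlg.le
  -- the centered entry sums
  set S : Fin n → Fin n → Ω → ℝ := fun a b ω => ∑ ℓ, (Ξ ℓ ω a b - W a b) with hS_def
  have hSmeas : ∀ a b, Measurable (S a b) := fun a b =>
    Finset.measurable_sum _ fun ℓ _ => (hEmeas ℓ a b).sub measurable_const
  have hSb : ∀ᵐ ω ∂μ, ∀ a b, |S a b ω| ≤ 2 * L * k := by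
    filter_upwards [hbAll] with ω h a b
    calc |∑ ℓ, (Ξ ℓ ω a b - W a b)| ≤ ∑ ℓ, |Ξ ℓ ω a b - W a b| :=
          Finset.abs_sum_le_sum_abs _ _
      _ ≤ ∑ _ℓ : Fin k, (2 * L) := by
          refine Finset.sum_le_sum fun ℓ _ => ?_
          calc |Ξ ℓ ω a b - W a b| ≤ |Ξ ℓ ω a b| + |W a b| := abs_sub _ _
            _ ≤ L + L := add_le_add ((hentry _ a b).trans (h ℓ)) (hWb a b)
            _ = 2 * L := by ring
      _ = 2 * L * k := by
          rw [Finset.sum_const, Finset.card_univ, Fintype.card_fin, nsmul_eq_mul]; ring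
  -- mgf bound for each entry sum
  have hmgf : ∀ (a b : Fin n) (u : ℝ),
      ∫ ω, Real.exp (u * S a b ω) ∂μ ≤ Real.exp (k * (u ^ 2 * (2 * L) ^ 2 / 2)) := by
    intro a b u
    set Xf : Fin k → Ω → ℝ := fun ℓ ω => Ξ ℓ ω a b - W a b with hXf
    have hXmeas : ∀ ℓ, Measurable (Xf ℓ) := fun ℓ => (hEmeas ℓ a b).sub measurable_const
    have hXindep : iIndepFun Xf μ :=
      hindep.comp (fun _ℓ (M : Fin n → Fin n → ℝ) => M a b - W a b)
        (fun _ℓ => by fun_prop)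
    have hmgf_one : ∀ ℓ, mgf (Xf ℓ) μ u ≤ Real.exp (u ^ 2 * (2 * L) ^ 2 / 2) := by
      intro ℓ
      refine aux_mgf_le (hXmeas ℓ) (by positivity) ?_ ?_ u
      · filter_upwards [hbound ℓ] with ω h
        calc |Ξ ℓ ω a b - W a b| ≤ |Ξ ℓ ω a b| + |W a b| := abs_sub _ _
          _ ≤ L + L := add_le_add ((hentry _ a b).trans h) (hWb a b)
          _ = 2 * L := by ring
      · show ∫ ω, (Ξ ℓ ω a b - W a b) ∂μ = 0
        rw [integral_sub (hEint ℓ a b) (integrable_const _), hmean ℓ a b, integral_const]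
        simp
    have hsum_eq : (fun ω => Real.exp (u * S a b ω))
        = fun ω => Real.exp (u * (∑ ℓ, Xf ℓ) ω) := by
      funext ω
      simp [hS_def, hXf, Finset.sum_apply]
    calc ∫ ω, Real.exp (u * S a b ω) ∂μ = mgf (∑ ℓ, Xf ℓ) μ u := by rw [hsum_eq]; rfl
      _ = ∏ ℓ, mgf (Xf ℓ) μ u := hXindep.mgf_sum hXmeas Finset.univ
      _ ≤ ∏ _ℓ : Fin k, Real.exp (u ^ 2 * (2 * L) ^ 2 / 2) :=
          Finset.prod_le_prod (fun ℓ _ => mgf_nonneg) (fun ℓ _ => hmgf_one ℓ)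
      _ = Real.exp (k * (u ^ 2 * (2 * L) ^ 2 / 2)) := by
          rw [Finset.prod_const, Finset.card_univ, Fintype.card_fin, ← Real.exp_nat_mul]
  -- relating S to the matrix F
  have hSF : ∀ ω (a b : Fin n), (∑ ℓ, Ξ ℓ ω - (k:ℝ) • W) a b = S a b ω := by
    intro ω a b
    simp only [Pi.sub_apply, Pi.smul_apply, Finset.sum_apply, smul_eq_mul, hS_def,
      Finset.sum_sub_distrib, Finset.sum_const, Finset.card_univ, Fintype.card_fin,
      nsmul_eq_mul]
  have hFmeas : Measurable (fun ω => ∑ ℓ, Ξ ℓ ω - (k:ℝ) • W) := by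
    exact (Finset.measurable_sum _ fun ℓ _ => hmeas ℓ).sub measurable_const
  have hGmeas : Measurable (fun ω => ‖∑ ℓ, Ξ ℓ ω - (k:ℝ) • W‖) := hFmeas.norm
  have hGb : ∀ᵐ ω ∂μ, ‖∑ ℓ, Ξ ℓ ω - (k:ℝ) • W‖ ≤ 2 * L * k := by
    filter_upwards [hSb] with ω h
    rw [pi_norm_le_iff_of_nonneg (by positivity)]
    intro a
    rw [pi_norm_le_iff_of_nonneg (by positivity)]
    intro b
    rw [Real.norm_eq_abs]
    calc |(∑ ℓ, Ξ ℓ ω - (k:ℝ) • W) a b| = |S a b ω| := by rw [hSF]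
      _ ≤ 2 * L * k := h a b
  have hGint : Integrable (fun ω => ‖∑ ℓ, Ξ ℓ ω - (k:ℝ) • W‖) μ := by
    refine (integrable_const (2 * L * k)).mono' hGmeas.aestronglyMeasurable ?_
    filter_upwards [hGb] with ω h
    rwa [Real.norm_eq_abs, abs_of_nonneg (norm_nonneg _)]
  have hexpGint : Integrable (fun ω => Real.exp (t * ‖∑ ℓ, Ξ ℓ ω - (k:ℝ) • W‖)) μ := by
    refine (integrable_const (Real.exp (t * (2 * L * k)))).mono'
      ((hGmeas.const_mul t).exp).aestronglyMeasurable ?_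
    filter_upwards [hGb] with ω h
    rw [Real.norm_eq_abs, abs_of_pos (Real.exp_pos _), Real.exp_le_exp]
    exact mul_le_mul_of_nonneg_left h ht.le
  have hSexpint : ∀ (a b : Fin n) (u : ℝ),
      Integrable (fun ω => Real.exp (u * S a b ω)) μ := by
    intro a b u
    refine (integrable_const (Real.exp (|u| * (2 * L * k)))).mono'
      (((hSmeas a b).const_mul u).exp).aestronglyMeasurable ?_
    filter_upwards [hSb] with ω h
    rw [Real.norm_eq_abs, abs_of_pos (Real.exp_pos _), Real.exp_le_exp]
    calc u * S a b ω ≤ |u * S a b ω| := le_abs_self _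
      _ = |u| * |S a b ω| := abs_mul _ _
      _ ≤ |u| * (2 * L * k) := mul_le_mul_of_nonneg_left (h a b) (abs_nonneg u)
  -- pointwise maximal bound
  have hpt : ∀ᵐ ω ∂μ, Real.exp (t * ‖∑ ℓ, Ξ ℓ ω - (k:ℝ) • W‖)
      ≤ ∑ a, ∑ b, (Real.exp (t * S a b ω) + Real.exp (-t * S a b ω)) := by
    refine Filter.Eventually.of_forall fun ω => ?_
    obtain ⟨p, -, hp⟩ := Finset.exists_max_image (Finset.univ : Finset (Fin n × Fin n))
      (fun q => |S q.1 q.2 ω|) ⟨(⟨0, hn⟩, ⟨0, hn⟩), Finset.mem_univ _⟩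
    have hnorm : ‖∑ ℓ, Ξ ℓ ω - (k:ℝ) • W‖ ≤ |S p.1 p.2 ω| := by
      rw [pi_norm_le_iff_of_nonneg (abs_nonneg _)]
      intro a
      rw [pi_norm_le_iff_of_nonneg (abs_nonneg _)]
      intro b
      rw [Real.norm_eq_abs, hSF]
      exact hp (a, b) (Finset.mem_univ _)
    have h1 : Real.exp (t * ‖∑ ℓ, Ξ ℓ ω - (k:ℝ) • W‖) ≤ Real.exp (t * |S p.1 p.2 ω|) := by
      rw [Real.exp_le_exp]
      exact mul_le_mul_of_nonneg_left hnorm ht.le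
    have h2 : Real.exp (t * |S p.1 p.2 ω|)
        ≤ Real.exp (t * S p.1 p.2 ω) + Real.exp (-t * S p.1 p.2 ω) := by
      rcases abs_cases (S p.1 p.2 ω) with ⟨he, -⟩ | ⟨he, -⟩
      · rw [he]
        exact le_add_of_nonneg_right (Real.exp_pos _).le
      · rw [he, mul_neg, ← neg_mul]
        exact le_add_of_nonneg_left (Real.exp_pos _).le
    have h3 : Real.exp (t * S p.1 p.2 ω) + Real.exp (-t * S p.1 p.2 ω)
        ≤ ∑ b, (Real.exp (t * S p.1 b ω) + Real.exp (-t * S p.1 b ω)) :=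
      Finset.single_le_sum (f := fun b => Real.exp (t * S p.1 b ω) + Real.exp (-t * S p.1 b ω))
        (fun b _ => by positivity) (Finset.mem_univ p.2)
    have h4 : ∑ b, (Real.exp (t * S p.1 b ω) + Real.exp (-t * S p.1 b ω))
        ≤ ∑ a, ∑ b, (Real.exp (t * S a b ω) + Real.exp (-t * S a b ω)) :=
      Finset.single_le_sum
        (f := fun a => ∑ b, (Real.exp (t * S a b ω) + Real.exp (-t * S a b ω)))
        (fun a _ => Finset.sum_nonneg fun b _ => by positivity) (Finset.mem_univ p.1)
    exact h1.trans (h2.trans (h3.trans h4))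
  have hsumint : Integrable
      (fun ω => ∑ a, ∑ b, (Real.exp (t * S a b ω) + Real.exp (-t * S a b ω))) μ := by
    refine integrable_finset_sum _ fun a _ => integrable_finset_sum _ fun b _ => ?_
    exact (hSexpint a b t).add (hSexpint a b (-t))
  -- step C: bound the integral of exp (t * norm)
  have hstepC : ∫ ω, Real.exp (t * ‖∑ ℓ, Ξ ℓ ω - (k:ℝ) • W‖) ∂μ
      ≤ 2 * (n:ℝ) ^ 2 * Real.exp (k * (t ^ 2 * (2 * L) ^ 2 / 2)) := by
    calc ∫ ω, Real.exp (t * ‖∑ ℓ, Ξ ℓ ω - (k:ℝ) • W‖) ∂μ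
        ≤ ∫ ω, ∑ a, ∑ b, (Real.exp (t * S a b ω) + Real.exp (-t * S a b ω)) ∂μ :=
          integral_mono_ae hexpGint hsumint hpt
      _ = ∑ a, ∫ ω, ∑ b, (Real.exp (t * S a b ω) + Real.exp (-t * S a b ω)) ∂μ :=
          integral_finset_sum _ fun a _ => integrable_finset_sum _ fun b _ =>
            (hSexpint a b t).add (hSexpint a b (-t))
      _ = ∑ a, ∑ b, ((∫ ω, Real.exp (t * S a b ω) ∂μ) + ∫ ω, Real.exp (-t * S a b ω) ∂μ) := by
          refine Finset.sum_congr rfl fun a _ => ?_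
          refine (integral_finset_sum _ fun b _ =>
            (hSexpint a b t).add (hSexpint a b (-t))).trans ?_
          exact Finset.sum_congr rfl fun b _ =>
            integral_add (hSexpint a b t) (hSexpint a b (-t))
      _ ≤ ∑ _a : Fin n, ∑ _b : Fin n,
            (Real.exp (k * (t ^ 2 * (2 * L) ^ 2 / 2))
              + Real.exp (k * (t ^ 2 * (2 * L) ^ 2 / 2))) := by
          refine Finset.sum_le_sum fun a _ => Finset.sum_le_sum fun b _ => ?_
          refine add_le_add (hmgf a b t) ?_
          have := hmgf a b (-t)
          rwa [neg_sq] at this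
      _ = 2 * (n:ℝ) ^ 2 * Real.exp (k * (t ^ 2 * (2 * L) ^ 2 / 2)) := by
          rw [Finset.sum_const, Finset.sum_const, Finset.card_univ, Fintype.card_fin,
            nsmul_eq_mul, nsmul_eq_mul]
          ring
  -- Jensen
  set IG : ℝ := ∫ ω, ‖∑ ℓ, Ξ ℓ ω - (k:ℝ) • W‖ ∂μ with hIG_def
  have hjensen : Real.exp (t * IG) ≤ ∫ ω, Real.exp (t * ‖∑ ℓ, Ξ ℓ ω - (k:ℝ) • W‖) ∂μ := by
    have h := (convexOn_exp).map_integral_le (μ := μ)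
      (f := fun ω => t * ‖∑ ℓ, Ξ ℓ ω - (k:ℝ) • W‖)
      Real.continuous_exp.continuousOn isClosed_univ
      (Filter.Eventually.of_forall fun _ => Set.mem_univ _)
      (hGint.const_mul t) (by exact hexpGint)
    rwa [integral_const_mul] at h
  -- combine and take logs
  have hX : (k:ℝ) * (t ^ 2 * (2 * L) ^ 2 / 2) = lg := by
    have ht2 : t ^ 2 = lg / (2 * (k:ℝ) * L ^ 2) := by
      rw [ht_def, div_pow, mul_pow, mul_pow, hs2sq, hsksq, hslsq]
    rw [ht2]
    field_simp
  have hcomb : Real.exp (t * IG) ≤ 2 * (n:ℝ) ^ 2 * Real.exp lg := by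
    calc Real.exp (t * IG) ≤ _ := hjensen
      _ ≤ 2 * (n:ℝ) ^ 2 * Real.exp (k * (t ^ 2 * (2 * L) ^ 2 / 2)) := hstepC
      _ = 2 * (n:ℝ) ^ 2 * Real.exp lg := by rw [hX]
  have hlog : t * IG ≤ 2 * lg := by
    have h := Real.log_le_log (Real.exp_pos _) hcomb
    rw [Real.log_exp, Real.log_mul (by positivity) (Real.exp_ne_zero _),
      Real.log_exp, ← hlg_def] at h
    linarith
  have hIGle : IG ≤ 2 * lg / t := by
    rw [le_div_iff₀ ht, mul_comm]
    exact hlog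
  -- final algebra
  have hrpow : (k:ℝ) ^ (-(1:ℝ)/2) = (Real.sqrt k)⁻¹ := by
    rw [neg_div, Real.rpow_neg hk0.le, Real.sqrt_eq_rpow]
  have hkey : 2 * lg / t = (k:ℝ) * (2 * L * (Real.sqrt k)⁻¹ * Real.sqrt (2 * lg)) := by
    have e2 : Real.sqrt (2 * lg) = Real.sqrt 2 * Real.sqrt lg := Real.sqrt_mul (by norm_num) _
    have e4 : lg = Real.sqrt lg ^ 2 := hslsq.symm
    have e5 : (k:ℝ) = Real.sqrt k ^ 2 := hsksq.symm
    rw [ht_def, e2]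
    field_simp
    linear_combination lg * hsksq
      - (k:ℝ) * hslsq
  have hrw : ∀ ω, ‖(k:ℝ)⁻¹ • ∑ ℓ, Ξ ℓ ω - W‖
      = (k:ℝ)⁻¹ * ‖∑ ℓ, Ξ ℓ ω - (k:ℝ) • W‖ := by
    intro ω
    rw [show (k:ℝ)⁻¹ • ∑ ℓ, Ξ ℓ ω - W = (k:ℝ)⁻¹ • (∑ ℓ, Ξ ℓ ω - (k:ℝ) • W) by
      rw [smul_sub, smul_smul, inv_mul_cancel₀ hk0.ne', one_smul]]
    rw [norm_smul, Real.norm_eq_abs, abs_of_pos (by positivity)]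
  have hLHS : ∫ ω, ‖(k:ℝ)⁻¹ • ∑ ℓ, Ξ ℓ ω - W‖ ∂μ = (k:ℝ)⁻¹ * IG := by
    rw [hIG_def, ← integral_const_mul]
    exact integral_congr_ae (Filter.Eventually.of_forall fun ω => hrw ω)
  rw [hLHS, hrpow]
  calc (k:ℝ)⁻¹ * IG ≤ (k:ℝ)⁻¹ * (2 * lg / t) := by
        exact mul_le_mul_of_nonneg_left hIGle (by positivity)
    _ = 2 * L * (Real.sqrt k)⁻¹ * Real.sqrt (2 * lg) := by
        rw [hkey, ← mul_assoc, inv_mul_cancel₀ hk0.ne', one_mul]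
end

section
/- Let mu, nu be jointly Gaussian real random variables with mean zero, E[mu^2] <= 1, E[nu^2] <= 1, and E[mu nu] = alpha. Then there exists a symmetric 2x2 matrix B with eigenvalues lambda_1, lambda_2 satisfying lambda_1 + lambda_2 = alpha and lambda_1^2 + lambda_2^2 <= 1, and an R^2-valued standard Gaussian z with mu * nu = z^T B z. -/
open MeasureTheory ProbabilityTheory
open Real Set Filter Polynomial
open scoped ENNReal NNReal

/- ### Real-line Gaussian integral facts -/

private lemma intE' : ∫ x : ℝ, rexp (-(1/2) * x ^ 2) = Real.sqrt (2 * π) := by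
  rw [integral_gaussian]
  rw [show π / (1/2) = 2 * π by ring]

private lemma int_odd' : ∫ x : ℝ, x * rexp (-(1/2) * x ^ 2) = 0 := by
  have h : ∫ x : ℝ, -(x * rexp (-(1/2) * x ^ 2)) = ∫ x : ℝ, x * rexp (-(1/2) * x ^ 2) := by
    have h := integral_neg_eq_self (fun x : ℝ => x * rexp (-(1/2) * x ^ 2)) volume
    refine Eq.trans ?_ h
    congr 1; ext x; rw [neg_sq]; ring
  rw [integral_neg] at h
  linarith

private lemma integrable_sq_exp' : Integrable (fun x : ℝ => x ^ 2 * rexp (-(1/2) * x ^ 2)) := by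
  have h := integrable_rpow_mul_exp_neg_mul_sq (b := 1/2) (by norm_num) (s := 2) (by norm_num)
  have e : (fun x : ℝ => x ^ (2:ℝ) * rexp (-(1/2) * x ^ 2))
      = fun x : ℝ => x ^ 2 * rexp (-(1/2) * x ^ 2) :=
    funext fun x => by rw [show (2:ℝ) = ((2:ℕ):ℝ) by norm_num, Real.rpow_natCast]
  rw [← e]
  exact h

private lemma int_sq' : ∫ x : ℝ, x ^ 2 * rexp (-(1/2) * x ^ 2) = Real.sqrt (2 * π) := by
  have hg : ∀ x : ℝ, HasDerivAt (fun y : ℝ => -y * rexp (-(1/2) * y ^ 2))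
      ((x ^ 2 - 1) * rexp (-(1/2) * x ^ 2)) x := by
    intro x
    have h1 := (hasDerivAt_pow 2 x).const_mul (-(1/2) : ℝ)
    have h2 := h1.exp
    have h3 := (hasDerivAt_id x).neg.mul h2
    convert h3 using 1
    · rfl
    · rfl
    · rfl
    show (x ^ 2 - 1) * rexp (-(1/2) * x ^ 2)
      = -1 * rexp (-(1/2) * x ^ 2) + -x * (rexp (-(1/2) * x ^ 2) * (-(1/2) * (((2:ℕ):ℝ) * x ^ 1)))
    push_cast
    ring
  have hint : IntegrableOn (fun x : ℝ => (x ^ 2 - 1) * rexp (-(1/2) * x ^ 2)) (Set.Ioi 0) := by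
    refine (Integrable.sub integrable_sq_exp'
      (integrable_exp_neg_mul_sq (b := 1/2) (by norm_num))).integrableOn.congr_fun
      (fun x _ => by simp only [Pi.sub_apply]; ring) measurableSet_Ioi
  have hint2 : IntegrableOn (fun x : ℝ => (x ^ 2 - 1) * rexp (-(1/2) * x ^ 2)) (Set.Iic 0) := by
    refine (Integrable.sub integrable_sq_exp'
      (integrable_exp_neg_mul_sq (b := 1/2) (by norm_num))).integrableOn.congr_fun
      (fun x _ => by simp only [Pi.sub_apply]; ring) measurableSet_Iic
  have hmul : Tendsto (fun x : ℝ => x * rexp (-(1/2) * x ^ 2)) atTop (nhds 0) := by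
    have h := (rpow_mul_exp_neg_mul_sq_isLittleO_exp_neg (b := 1/2) (by norm_num) 1)
    have hc : Tendsto (fun x : ℝ => rexp (-(1/2) * x)) atTop (nhds 0) := by
      have h0 : Tendsto (fun x : ℝ => (1/2) * x) atTop atTop :=
        Tendsto.const_mul_atTop (by norm_num) tendsto_id
      have h1 := tendsto_exp_neg_atTop_nhds_zero.comp h0
      refine h1.congr fun x => ?_
      simp only [Function.comp_apply, neg_mul]
    have h2 : Tendsto (fun x : ℝ => x ^ (1:ℝ) * rexp (-(1/2) * x ^ 2)) atTop (nhds 0) :=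
      h.tendsto_zero_of_tendsto hc
    refine h2.congr' ?_
    filter_upwards [eventually_gt_atTop (0:ℝ)] with x hx
    rw [Real.rpow_one]
  have htop : Tendsto (fun x : ℝ => -x * rexp (-(1/2) * x ^ 2)) atTop (nhds 0) := by
    have := hmul.neg
    simp only [neg_zero] at this
    refine this.congr fun x => by ring
  have hbot : Tendsto (fun x : ℝ => -x * rexp (-(1/2) * x ^ 2)) atBot (nhds 0) := by
    have h4 := hmul.comp tendsto_neg_atBot_atTop
    refine h4.congr fun x => ?_
    simp only [Function.comp_apply, neg_sq]
  have hIoi : ∫ x in Set.Ioi (0:ℝ), (x ^ 2 - 1) * rexp (-(1/2) * x ^ 2) = 0 := by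
    have := integral_Ioi_of_hasDerivAt_of_tendsto' (f := fun y : ℝ => -y * rexp (-(1/2) * y ^ 2))
      (fun x _ => hg x) hint htop
    simpa using this
  have hIic : ∫ x in Set.Iic (0:ℝ), (x ^ 2 - 1) * rexp (-(1/2) * x ^ 2) = 0 := by
    have := integral_Iic_of_hasDerivAt_of_tendsto' (f := fun y : ℝ => -y * rexp (-(1/2) * y ^ 2))
      (fun x _ => hg x) hint2 hbot
    simpa using this
  have hsplit : ∫ x : ℝ, (x ^ 2 - 1) * rexp (-(1/2) * x ^ 2) = 0 := by
    rw [← intervalIntegral.integral_Iic_add_Ioi (b := (0:ℝ)) hint2 hint, hIic, hIoi, add_zero]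
  have heq : ∫ x : ℝ, (x ^ 2 - 1) * rexp (-(1/2) * x ^ 2)
      = (∫ x : ℝ, x ^ 2 * rexp (-(1/2) * x ^ 2)) - ∫ x : ℝ, rexp (-(1/2) * x ^ 2) := by
    rw [← integral_sub integrable_sq_exp' (integrable_exp_neg_mul_sq (b := 1/2) (by norm_num))]
    congr 1; ext x; ring
  rw [heq, intE'] at hsplit
  linarith

/- ### Reduction of Gaussian integrals to Lebesgue integrals -/

private lemma pdf01 (x : ℝ) :
    gaussianPDFReal 0 1 x = (Real.sqrt (2 * π))⁻¹ * rexp (-(1/2) * x ^ 2) := by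
  simp only [gaussianPDFReal, NNReal.coe_one, mul_one, sub_zero]
  ring_nf

private lemma gauss_int_eq (g : ℝ → ℝ) :
    ∫ x, g x ∂(gaussianReal 0 1) = ∫ x, g x * gaussianPDFReal 0 1 x := by
  rw [gaussianReal_of_var_ne_zero 0 one_ne_zero]
  have h : (gaussianPDF 0 1) = fun x => ((gaussianPDFReal 0 1 x).toNNReal : ℝ≥0∞) := by
    ext x; simp [gaussianPDF, ENNReal.ofReal]
  rw [h, integral_withDensity_eq_integral_smul
    ((measurable_gaussianPDFReal 0 1).real_toNNReal)]
  congr 1; ext x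
  simp only [NNReal.smul_def, Real.coe_toNNReal _ (gaussianPDFReal_nonneg 0 1 x),
    smul_eq_mul, mul_comm]

private lemma gauss_integrable_iff (g : ℝ → ℝ) :
    Integrable g (gaussianReal 0 1) ↔
      Integrable (fun x => g x * gaussianPDFReal 0 1 x) volume := by
  rw [gaussianReal_of_var_ne_zero 0 one_ne_zero]
  have h : (gaussianPDF 0 1) = fun x => ((gaussianPDFReal 0 1 x).toNNReal : ℝ≥0∞) := by
    ext x; simp [gaussianPDF, ENNReal.ofReal]
  rw [h, integrable_withDensity_iff_integrable_smul
    ((measurable_gaussianPDFReal 0 1).real_toNNReal)]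
  constructor <;> intro hi <;> refine hi.congr (Filter.Eventually.of_forall fun x => ?_) <;>
    simp only [NNReal.smul_def, Real.coe_toNNReal _ (gaussianPDFReal_nonneg 0 1 x),
      smul_eq_mul, mul_comm]

private lemma sqrt2pi_pos : (0:ℝ) < Real.sqrt (2 * π) :=
  Real.sqrt_pos.2 (by positivity)

private lemma gauss_mean : ∫ x, x ∂(gaussianReal 0 1) = 0 := by
  rw [gauss_int_eq]
  have : ∀ x : ℝ, x * gaussianPDFReal 0 1 x
      = (Real.sqrt (2 * π))⁻¹ * (x * rexp (-(1/2) * x ^ 2)) := fun x => by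
    rw [pdf01]; ring
  simp_rw [this]
  rw [integral_const_mul, int_odd', mul_zero]

private lemma gauss_second_moment : ∫ x, x ^ 2 ∂(gaussianReal 0 1) = 1 := by
  rw [gauss_int_eq]
  have : ∀ x : ℝ, x ^ 2 * gaussianPDFReal 0 1 x
      = (Real.sqrt (2 * π))⁻¹ * (x ^ 2 * rexp (-(1/2) * x ^ 2)) := fun x => by
    rw [pdf01]; ring
  simp_rw [this]
  rw [integral_const_mul, int_sq', inv_mul_cancel₀ sqrt2pi_pos.ne']

private lemma gauss_integrable_id : Integrable (fun x : ℝ => x) (gaussianReal 0 1) := by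
  rw [gauss_integrable_iff]
  have h := (integrable_mul_exp_neg_mul_sq (b := 1/2) (by norm_num)).const_mul
    ((Real.sqrt (2 * π))⁻¹)
  refine h.congr (Filter.Eventually.of_forall fun x => ?_)
  simp only [pdf01]; ring

private lemma gauss_integrable_sq : Integrable (fun x : ℝ => x ^ 2) (gaussianReal 0 1) := by
  rw [gauss_integrable_iff]
  have h := integrable_sq_exp'.const_mul ((Real.sqrt (2 * π))⁻¹)
  refine h.congr (Filter.Eventually.of_forall fun x => ?_)
  simp only [pdf01]; ring

/- ### 2×2 characteristic polynomial -/

private lemma charpoly_fin_two' (M : Matrix (Fin 2) (Fin 2) ℝ) :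
    M.charpoly = X ^ 2 - C M.trace * X + C M.det := by
  rw [Matrix.charpoly, Matrix.det_fin_two]
  rw [Matrix.charmatrix_apply_eq, Matrix.charmatrix_apply_eq,
    Matrix.charmatrix_apply_ne _ _ _ (by decide : (0 : Fin 2) ≠ 1),
    Matrix.charmatrix_apply_ne _ _ _ (by decide : (1 : Fin 2) ≠ 0),
    Matrix.trace_fin_two, Matrix.det_fin_two]
  simp only [map_add, map_sub, map_mul]
  ring

/-- Let `μ, ν` be jointly Gaussian mean-zero real random variables (i.e. a linear image of a
pair of independent standard Gaussians) with `E[μ²] ≤ 1`, `E[ν²] ≤ 1`, `E[μν] = α`. Then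
there is a symmetric `2×2` matrix `B` with eigenvalues `λ₁, λ₂` satisfying `λ₁ + λ₂ = α`,
`λ₁² + λ₂² ≤ 1`, and a standard Gaussian vector `z` in `ℝ²` with `μ ν = zᵀ B z` a.s. -/
theorem stmt11 {Ω : Type*} [MeasurableSpace Ω] (P : Measure Ω) [IsProbabilityMeasure P]
    (mu nu : Ω → ℝ) (α : ℝ)
    (hgauss : ∃ (u v : Ω → ℝ) (p q r s : ℝ),
      Measurable u ∧ Measurable v ∧ IndepFun u v P ∧
      Measure.map u P = gaussianReal 0 1 ∧ Measure.map v P = gaussianReal 0 1 ∧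
      mu = (fun ω => p * u ω + q * v ω) ∧ nu = (fun ω => r * u ω + s * v ω))
    (hm : ∫ ω, (mu ω) ^ 2 ∂P ≤ 1) (hn : ∫ ω, (nu ω) ^ 2 ∂P ≤ 1)
    (hα : ∫ ω, mu ω * nu ω ∂P = α) :
    ∃ (B : Matrix (Fin 2) (Fin 2) ℝ) (lam : Fin 2 → ℝ) (z : Ω → Fin 2 → ℝ),
      B.IsSymm ∧
      B.charpoly =
        (Polynomial.X - Polynomial.C (lam 0)) * (Polynomial.X - Polynomial.C (lam 1)) ∧
      lam 0 + lam 1 = α ∧ (lam 0) ^ 2 + (lam 1) ^ 2 ≤ 1 ∧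
      IndepFun (fun ω => z ω 0) (fun ω => z ω 1) P ∧
      Measure.map (fun ω => z ω 0) P = gaussianReal 0 1 ∧
      Measure.map (fun ω => z ω 1) P = gaussianReal 0 1 ∧
      ∀ᵐ ω ∂P, mu ω * nu ω = ∑ i, ∑ j, z ω i * B i j * z ω j := by
  obtain ⟨u, v, p, q, r, s, hu, hv, huv, hmapu, hmapv, hmu, hnu⟩ := hgauss
  -- moments of u and v
  have hu2int : Integrable (fun ω => u ω ^ 2) P := by
    have h : Integrable (fun x : ℝ => x ^ 2) (Measure.map u P) := by
      rw [hmapu]; exact gauss_integrable_sq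
    exact (integrable_map_measure (by fun_prop) hu.aemeasurable).mp h
  have hv2int : Integrable (fun ω => v ω ^ 2) P := by
    have h : Integrable (fun x : ℝ => x ^ 2) (Measure.map v P) := by
      rw [hmapv]; exact gauss_integrable_sq
    exact (integrable_map_measure (by fun_prop) hv.aemeasurable).mp h
  have huint : Integrable u P := by
    have h : Integrable (fun x : ℝ => x) (Measure.map u P) := by
      rw [hmapu]; exact gauss_integrable_id
    exact (integrable_map_measure aestronglyMeasurable_id hu.aemeasurable).mp h
  have hvint : Integrable v P := by
    have h : Integrable (fun x : ℝ => x) (Measure.map v P) := by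
      rw [hmapv]; exact gauss_integrable_id
    exact (integrable_map_measure aestronglyMeasurable_id hv.aemeasurable).mp h
  have hu2 : ∫ ω, u ω ^ 2 ∂P = 1 := by
    have h := integral_map (μ := P) (φ := u) (f := fun x : ℝ => x ^ 2) hu.aemeasurable
      (measurable_id.pow_const 2).aestronglyMeasurable
    rw [hmapu, gauss_second_moment] at h
    exact h.symm
  have hv2 : ∫ ω, v ω ^ 2 ∂P = 1 := by
    have h := integral_map (μ := P) (φ := v) (f := fun x : ℝ => x ^ 2) hv.aemeasurable
      (measurable_id.pow_const 2).aestronglyMeasurable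
    rw [hmapv, gauss_second_moment] at h
    exact h.symm
  have humean : ∫ ω, u ω ∂P = 0 := by
    have h := integral_map (μ := P) (φ := u) (f := fun x : ℝ => x) hu.aemeasurable
      aestronglyMeasurable_id
    rw [hmapu, gauss_mean] at h
    exact h.symm
  have hvmean : ∫ ω, v ω ∂P = 0 := by
    have h := integral_map (μ := P) (φ := v) (f := fun x : ℝ => x) hv.aemeasurable
      aestronglyMeasurable_id
    rw [hmapv, gauss_mean] at h
    exact h.symm
  have huvint : Integrable (fun ω => u ω * v ω) P := huv.integrable_mul huint hvint
  have huvzero : ∫ ω, u ω * v ω ∂P = 0 := by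
    have h := huv.integral_mul_eq_mul_integral hu.aestronglyMeasurable hv.aestronglyMeasurable
    rw [show (fun ω => u ω * v ω) = u * v from rfl]
    rw [h, humean, zero_mul]
  -- expansions
  have expand : ∀ (a b c d : ℝ),
      ∫ ω, (a * u ω + b * v ω) * (c * u ω + d * v ω) ∂P = a * c + b * d := by
    intro a b c d
    have h1 : (fun ω => (a * u ω + b * v ω) * (c * u ω + d * v ω))
        = fun ω => (a * c) * (u ω ^ 2) + ((a * d + b * c) * (u ω * v ω)
          + (b * d) * (v ω ^ 2)) := funext fun ω => by ring
    have i1 : Integrable (fun ω => (a * c) * (u ω ^ 2)) P := hu2int.const_mul _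
    have i2 : Integrable (fun ω => (a * d + b * c) * (u ω * v ω)
        + (b * d) * (v ω ^ 2)) P := (huvint.const_mul _).add (hv2int.const_mul _)
    rw [h1, integral_add i1 i2,
      integral_add (huvint.const_mul _) (hv2int.const_mul _),
      integral_const_mul, integral_const_mul, integral_const_mul, hu2, hv2, huvzero]
    ring
  have hm' : p ^ 2 + q ^ 2 ≤ 1 := by
    have he := expand p q p q
    rw [hmu] at hm
    have h2 : ∫ ω, (p * u ω + q * v ω) ^ 2 ∂P
        = ∫ ω, (p * u ω + q * v ω) * (p * u ω + q * v ω) ∂P := by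
      congr 1; ext ω; ring
    rw [h2, he] at hm
    nlinarith [hm]
  have hn' : r ^ 2 + s ^ 2 ≤ 1 := by
    have he := expand r s r s
    rw [hnu] at hn
    have h2 : ∫ ω, (r * u ω + s * v ω) ^ 2 ∂P
        = ∫ ω, (r * u ω + s * v ω) * (r * u ω + s * v ω) ∂P := by
      congr 1; ext ω; ring
    rw [h2, he] at hn
    nlinarith [hn]
  have hα' : p * r + q * s = α := by
    have he := expand p q r s
    rw [hmu, hnu, he] at hα
    exact hα
  -- the eigenvalue discriminant
  obtain ⟨d, hd2⟩ : ∃ d : ℝ, d ^ 2 = (p * r - q * s) ^ 2 + (p * s + q * r) ^ 2 :=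
    ⟨Real.sqrt ((p * r - q * s) ^ 2 + (p * s + q * r) ^ 2),
      Real.sq_sqrt (by positivity)⟩
  refine ⟨!![p * r, (p * s + q * r) / 2; (p * s + q * r) / 2, q * s],
    ![(p * r + q * s + d) / 2, (p * r + q * s - d) / 2],
    fun ω => ![u ω, v ω], ?_, ?_, ?_, ?_, ?_, ?_, ?_, ?_⟩
  · rw [Matrix.IsSymm]
    ext i j
    fin_cases i <;> fin_cases j <;> rfl
  · show Matrix.charpoly _
      = (X - C ((p * r + q * s + d) / 2)) * (X - C ((p * r + q * s - d) / 2))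
    rw [charpoly_fin_two', Matrix.trace_fin_two_of, Matrix.det_fin_two_of]
    have hsum : p * r + q * s = (p * r + q * s + d) / 2 + (p * r + q * s - d) / 2 := by ring
    have hprod : p * r * (q * s) - (p * s + q * r) / 2 * ((p * s + q * r) / 2)
        = (p * r + q * s + d) / 2 * ((p * r + q * s - d) / 2) := by
      nlinarith [hd2]
    rw [hsum, hprod, map_add, map_mul]
    ring
  · show (p * r + q * s + d) / 2 + (p * r + q * s - d) / 2 = α
    rw [← hα']; ring
  · show ((p * r + q * s + d) / 2) ^ 2 + ((p * r + q * s - d) / 2) ^ 2 ≤ 1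
    have key : ((p * r + q * s + d) / 2) ^ 2 + ((p * r + q * s - d) / 2) ^ 2
        = ((p * r + q * s) ^ 2 + d ^ 2) / 2 := by ring
    rw [key, hd2]
    nlinarith [mul_nonneg (by linarith : (0:ℝ) ≤ 1 - (p ^ 2 + q ^ 2))
      (by linarith : (0:ℝ) ≤ 1 - (r ^ 2 + s ^ 2)), sq_nonneg (p * s - q * r)]
  · have h0 : (fun ω => ![u ω, v ω] 0) = u := rfl
    have h1 : (fun ω => ![u ω, v ω] 1) = v := rfl
    rw [h0, h1]; exact huv
  · have h0 : (fun ω => ![u ω, v ω] 0) = u := rfl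
    rw [h0]; exact hmapu
  · have h1 : (fun ω => ![u ω, v ω] 1) = v := rfl
    rw [h1]; exact hmapv
  · refine Filter.Eventually.of_forall fun ω => ?_
    rw [hmu, hnu]
    simp only [Fin.sum_univ_two, Matrix.cons_val_zero, Matrix.cons_val_one, Matrix.head_cons,
      Matrix.of_apply, Matrix.cons_val', Matrix.head_fin_const]
    ring
end

section
/- For the norm ||A|| = min{ t : exists M, N with [[M, A],[A^T, N]] PSD, M_ii <= t for all i, N_jj <= t for all j } on R^{m x n}, one has ||A||_inf <= ||A|| <= sqrt(min(m,n)) * ||A||_inf for every A. -/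
open Matrix

noncomputable def matNorm {m n : ℕ} (A : Matrix (Fin m) (Fin n) ℝ) : ℝ :=
  sInf {t : ℝ | ∃ (M : Matrix (Fin m) (Fin m) ℝ) (N : Matrix (Fin n) (Fin n) ℝ),
    (Matrix.fromBlocks M A Aᵀ N).PosSemidef ∧ (∀ i, M i i ≤ t) ∧ (∀ j, N j j ≤ t)}

private lemma lower_aux {m n : ℕ} (A : Matrix (Fin m) (Fin n) ℝ)
    {M : Matrix (Fin m) (Fin m) ℝ} {N : Matrix (Fin n) (Fin n) ℝ} {t : ℝ}
    (h : (fromBlocks M A Aᵀ N).PosSemidef) (hM : ∀ i, M i i ≤ t) (hN : ∀ j, N j j ≤ t)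
    (i : Fin m) (j : Fin n) : |A i j| ≤ t := by
  have key : ∀ c : ℝ, 0 ≤ M i i + c * A i j + (c * A i j + c * (c * N j j)) := by
    intro c
    have h2 := h.dotProduct_mulVec_nonneg (Sum.elim (Pi.single i (1:ℝ)) (Pi.single j c))
    simpa [fromBlocks_mulVec, sumElim_dotProduct_sumElim, dotProduct_add,
      mulVec_single, dotProduct_single, single_dotProduct, transpose_apply,
      mul_comm, mul_assoc, mul_left_comm] using h2
  have h1 := key 1
  have h2 := key (-1)
  have hMi := hM i
  have hNj := hN j
  rw [abs_le]
  constructor <;> nlinarith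

private lemma construct_aux {m n : ℕ} (hn : 1 ≤ n) (A : Matrix (Fin m) (Fin n) ℝ) {a : ℝ}
    (ha : 0 < a) (hA : ∀ i j, |A i j| ≤ a) :
    ∃ (M : Matrix (Fin m) (Fin m) ℝ) (N : Matrix (Fin n) (Fin n) ℝ),
      (fromBlocks M A Aᵀ N).PosSemidef ∧ (∀ i, M i i ≤ Real.sqrt n * a) ∧
      (∀ j, N j j ≤ Real.sqrt n * a) := by
  set s : ℝ := Real.sqrt n * a with hs
  have hn0 : (0:ℝ) < n := by exact_mod_cast hn
  have hs0 : 0 < s := mul_pos (Real.sqrt_pos.2 hn0) ha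
  have hsq : Real.sqrt s * Real.sqrt s = s := Real.mul_self_sqrt hs0.le
  have hsqs : Real.sqrt s ≠ 0 := by positivity
  refine ⟨s⁻¹ • (A * Aᵀ), s • (1 : Matrix (Fin n) (Fin n) ℝ), ?_, ?_, ?_⟩
  · have hB : fromBlocks (s⁻¹ • (A * Aᵀ)) A Aᵀ (s • (1 : Matrix (Fin n) (Fin n) ℝ)) =
        (fromRows ((Real.sqrt s)⁻¹ • A) (Real.sqrt s • (1 : Matrix (Fin n) (Fin n) ℝ))) *
        (fromRows ((Real.sqrt s)⁻¹ • A) (Real.sqrt s • (1 : Matrix (Fin n) (Fin n) ℝ)))ᴴ := by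
      rw [conjTranspose_fromRows_eq_fromCols_conjTranspose]
      rw [fromRows_mul_fromCols]
      have e1 : ((Real.sqrt s)⁻¹ : ℝ) * (Real.sqrt s)⁻¹ = s⁻¹ := by rw [← mul_inv, hsq]
      simp only [conjTranspose_smul, conjTranspose_eq_transpose_of_trivial, conjTranspose_one,
          star_trivial, Matrix.transpose_smul, Matrix.transpose_one, Matrix.smul_mul,
          Matrix.mul_smul, smul_smul, Matrix.mul_one,
          Matrix.one_mul, e1, hsq, inv_mul_cancel₀ hsqs, mul_inv_cancel₀ hsqs, one_smul]
    rw [hB]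
    exact posSemidef_self_mul_conjTranspose _
  · intro i
    have hsum : ∑ j, A i j * A i j ≤ n * a ^ 2 := by
      calc ∑ j, A i j * A i j ≤ ∑ _j : Fin n, a ^ 2 := by
            refine Finset.sum_le_sum fun j _ => ?_
            have := hA i j
            nlinarith [abs_nonneg (A i j), sq_abs (A i j)]
        _ = n * a ^ 2 := by simp [mul_comm]
    have hMi : (s⁻¹ • (A * Aᵀ)) i i = s⁻¹ * ∑ j, A i j * A i j := by
      simp [mul_apply]
    rw [hMi]
    have hss : n * a ^ 2 = s * s := by
      rw [hs]
      have : Real.sqrt n * Real.sqrt n = n := Real.mul_self_sqrt hn0.le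
      ring_nf
      nlinarith [this]
    calc s⁻¹ * ∑ j, A i j * A i j ≤ s⁻¹ * (n * a ^ 2) := by
          exact mul_le_mul_of_nonneg_left hsum (by positivity)
      _ = s := by rw [hss, ← mul_assoc, inv_mul_cancel₀ hs0.ne', one_mul]
  · intro j
    simp [Matrix.smul_apply]

/-- `‖A‖_∞ ≤ ‖A‖ ≤ √(min(m,n)) ‖A‖_∞`, where `‖A‖_∞ = max_{i,j} |A_{ij}|`. -/
theorem stmt16 (m n : ℕ) (hm : 1 ≤ m) (hn : 1 ≤ n) (A : Matrix (Fin m) (Fin n) ℝ) :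
    (⨆ p : Fin m × Fin n, |A p.1 p.2|) ≤ matNorm A ∧
    matNorm A ≤ Real.sqrt (min m n) * ⨆ p : Fin m × Fin n, |A p.1 p.2| := by
  haveI : Nonempty (Fin m) := ⟨⟨0, hm⟩⟩
  haveI : Nonempty (Fin n) := ⟨⟨0, hn⟩⟩
  set a : ℝ := ⨆ p : Fin m × Fin n, |A p.1 p.2| with ha
  set S : Set ℝ := {t : ℝ | ∃ (M : Matrix (Fin m) (Fin m) ℝ) (N : Matrix (Fin n) (Fin n) ℝ),
    (Matrix.fromBlocks M A Aᵀ N).PosSemidef ∧ (∀ i, M i i ≤ t) ∧ (∀ j, N j j ≤ t)} with hS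
  have haub : ∀ i j, |A i j| ≤ a :=
    fun i j => le_ciSup (f := fun p : Fin m × Fin n => |A p.1 p.2|) (Set.Finite.bddAbove (Set.finite_range _)) ⟨i, j⟩
  have ha0 : 0 ≤ a := (abs_nonneg _).trans (haub ⟨0, hm⟩ ⟨0, hn⟩)
  have lb : ∀ t ∈ S, a ≤ t := by
    rintro t ⟨M, N, hP, hM, hN⟩
    exact ciSup_le fun p => lower_aux A hP hM hN p.1 p.2
  have hmem : Real.sqrt (min m n) * a ∈ S := by
    rcases eq_or_lt_of_le ha0 with h0 | h0
    · have hA0 : A = 0 := by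
        ext i j
        have := haub i j
        rw [← h0] at this
        have := abs_nonneg (A i j)
        simpa using le_antisymm ‹|A i j| ≤ 0› this
      refine ⟨0, 0, ?_, ?_, ?_⟩
      · have : fromBlocks (0 : Matrix (Fin m) (Fin m) ℝ) A Aᵀ (0 : Matrix (Fin n) (Fin n) ℝ)
            = 0 := by simp [hA0]
        rw [this]
        exact PosSemidef.zero
      · intro i; simp [← h0]
      · intro j; simp [← h0]
    · rcases le_total n m with hnm | hmn
      · have hmin : min (m:ℝ) n = n := min_eq_right (by exact_mod_cast hnm)
        rw [hmin]
        exact construct_aux hn A h0 haub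
      · have hmin : min (m:ℝ) n = m := min_eq_left (by exact_mod_cast hmn)
        rw [hmin]
        obtain ⟨M', N', hP', hM', hN'⟩ := construct_aux hm Aᵀ h0 (fun j i => haub i j)
        rw [transpose_transpose] at hP'
        refine ⟨N', M', ?_, hN', hM'⟩
        have heq : fromBlocks N' A Aᵀ M' =
            (fromBlocks M' Aᵀ A N').submatrix Sum.swap Sum.swap := by
          rw [fromBlocks_submatrix_sum_swap_sum_swap]
        rw [heq]
        exact hP'.submatrix _
  constructor
  · exact le_csInf ⟨_, hmem⟩ lb
  · exact csInf_le ⟨a, lb⟩ hmem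
end

section
/- If n >= 2k, then for every n x n real matrix B of rank at most k, ||I_n - B||_inf >= 1/(2 sqrt(k)), where ||X||_inf = max_{i,j} |X_{ij}|. -/
open scoped RealInnerProductSpace

/-- If `n ≥ 2k` (with `k ≥ 1`), then any `n×n` matrix `B` of rank at most `k` satisfies
`‖I_n - B‖_∞ ≥ 1/(2√k)`, i.e. some entry of `I_n - B` has absolute value `≥ 1/(2√k)`. -/
theorem stmt18 (n k : ℕ) (hk : 1 ≤ k) (hn : 2 * k ≤ n)
    (B : Matrix (Fin n) (Fin n) ℝ) (hrank : B.rank ≤ k) :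
    ∃ a b, 1 / (2 * Real.sqrt k) ≤ |(1 : Matrix (Fin n) (Fin n) ℝ) a b - B a b| := by
  by_contra hcon
  push_neg at hcon
  set ε : ℝ := 1 / (2 * Real.sqrt k) with hε
  have hkpos : (0:ℝ) < k := by exact_mod_cast hk
  have hsq : Real.sqrt k > 0 := Real.sqrt_pos.mpr hkpos
  have hεpos : 0 < ε := by positivity
  have hε2 : ε ^ 2 = 1 / (4 * k) := by
    rw [hε, div_pow, mul_pow, Real.sq_sqrt hkpos.le]
    norm_num
  set m := 2 * k with hm
  have hmpos : 0 < m := by omega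
  let f : Fin m → Fin n := Fin.castLE hn
  have hfinj : Function.Injective f := Fin.castLE_injective hn
  set B' : Matrix (Fin m) (Fin m) ℝ := B.submatrix f f with hB'
  -- rank bound for the submatrix
  have hrank' : B'.rank ≤ k := by
    have h1 : B' = ((1 : Matrix (Fin n) (Fin n) ℝ).submatrix f (Equiv.refl (Fin n)) * B) *
        (1 : Matrix (Fin n) (Fin n) ℝ).submatrix (Equiv.refl (Fin n)) f := by
      rw [Matrix.one_submatrix_mul, Matrix.mul_submatrix_one]
      simp [hB']
    calc B'.rank ≤ ((1 : Matrix (Fin n) (Fin n) ℝ).submatrix f (Equiv.refl (Fin n)) * B).rank := by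
          rw [h1]; exact Matrix.rank_mul_le_left _ _
      _ ≤ B.rank := Matrix.rank_mul_le_right _ _
      _ ≤ k := hrank
  -- kernel dimension
  set L := B'.mulVecLin with hL
  have hker : k ≤ Module.finrank ℝ (LinearMap.ker L) := by
    have h1 := LinearMap.finrank_range_add_finrank_ker L
    have hr : Module.finrank ℝ (LinearMap.range L) = B'.rank := rfl
    have hdim : Module.finrank ℝ (Fin m → ℝ) = m := by simp
    rw [hr, hdim] at h1
    omega
  -- orthonormal basis of the kernel, inside Euclidean space
  let V : Submodule ℝ (EuclideanSpace ℝ (Fin m)) :=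
    LinearMap.ker (L ∘ₗ (WithLp.linearEquiv 2 ℝ (Fin m → ℝ)).toLinearMap)
  set d := Module.finrank ℝ V with hd
  have hkd : k ≤ d := by
    have : d = Module.finrank ℝ (LinearMap.ker L) := by
      rw [hd]
      show Module.finrank ℝ (LinearMap.ker (L ∘ₗ (WithLp.linearEquiv 2 ℝ (Fin m → ℝ)).toLinearMap)) = _
      rw [LinearMap.ker_comp, Submodule.comap_equiv_eq_map_symm, LinearEquiv.finrank_map_eq]
    omega
  let w := stdOrthonormalBasis ℝ V
  set v : Fin d → EuclideanSpace ℝ (Fin m) := fun j => (w j : EuclideanSpace ℝ (Fin m)) with hv'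
  have hv : Orthonormal ℝ v := w.orthonormal.comp_linearIsometry V.subtypeₗᵢ
  -- the matrix A' = 1 - B' and its rows
  set A' : Matrix (Fin m) (Fin m) ℝ := (1 : Matrix (Fin m) (Fin m) ℝ) - B' with hA'
  let r : Fin m → EuclideanSpace ℝ (Fin m) := fun a => WithLp.toLp 2 (fun i => A' a i)
  -- entry bound
  have hentry_lt : ∀ a i : Fin m, |A' a i| < ε := by
    intro a i
    have h1 : (1 : Matrix (Fin m) (Fin m) ℝ) a i = (1 : Matrix (Fin n) (Fin n) ℝ) (f a) (f i) := by
      rw [Matrix.one_apply, Matrix.one_apply]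
      simp [hfinj.eq_iff]
    have : A' a i = (1 : Matrix (Fin n) (Fin n) ℝ) (f a) (f i) - B (f a) (f i) := by
      simp [hA', hB', h1, Matrix.sub_apply, Matrix.submatrix_apply]
    rw [this]
    exact hcon _ _
  -- A' acts as identity on kernel vectors
  have hAv : ∀ j, A'.mulVec (WithLp.ofLp (v j)) = WithLp.ofLp (v j) := by
    intro j
    have hmem : v j ∈ V := (w j).2
    have hzero : B'.mulVec (WithLp.ofLp (v j)) = 0 := hmem
    rw [hA', Matrix.sub_mulVec, Matrix.one_mulVec, hzero, sub_zero]
  -- inner product formula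
  have hinner : ∀ (x y : EuclideanSpace ℝ (Fin m)), (inner ℝ x y : ℝ) = ∑ i, x i * y i := by
    intro x y
    simp [PiLp.inner_apply, RCLike.inner_apply, mul_comm]
  have hentry : ∀ (a : Fin m) (j : Fin d), (inner ℝ (r a) (v j) : ℝ) = v j a := by
    intro a j
    rw [hinner]
    have : ∑ i, r a i * v j i = A'.mulVec (WithLp.ofLp (v j)) a := by
      simp [Matrix.mulVec, dotProduct, r]
    rw [this, hAv]
  -- each column sum is 1
  have hone : ∀ j : Fin d, ∑ a, ((inner ℝ (r a) (v j) : ℝ))^2 = 1 := by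
    intro j
    simp_rw [hentry]
    have h1 : ∑ a, (v j a)^2 = (inner ℝ (v j) (v j) : ℝ) := by
      rw [hinner]; simp [sq]
    rw [h1, real_inner_self_eq_norm_sq, hv.1 j]
    norm_num
  -- Bessel
  have hbess : ∀ a : Fin m, ∑ j, ((inner ℝ (r a) (v j) : ℝ))^2 ≤ ∑ i, (A' a i)^2 := by
    intro a
    have h1 := hv.sum_inner_products_le (𝕜 := ℝ) (r a) (s := Finset.univ)
    have h2 : ∑ j, ((inner ℝ (r a) (v j) : ℝ))^2 = ∑ j, ‖(inner ℝ (v j) (r a) : ℝ)‖^2 := by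
      congr 1; funext j
      rw [real_inner_comm, Real.norm_eq_abs, sq_abs]
    have h3 : ‖r a‖^2 = ∑ i, (A' a i)^2 := by
      rw [← real_inner_self_eq_norm_sq, hinner]
      congr 1; funext i; rw [sq]
    rw [h2, ← h3]
    exact h1
  -- main chain
  have hchain : (d : ℝ) ≤ ∑ a : Fin m, ∑ i : Fin m, (A' a i)^2 := by
    calc (d : ℝ) = ∑ j : Fin d, (1:ℝ) := by simp
      _ = ∑ j : Fin d, ∑ a, ((inner ℝ (r a) (v j) : ℝ))^2 := by simp_rw [hone]
      _ = ∑ a, ∑ j, ((inner ℝ (r a) (v j) : ℝ))^2 := Finset.sum_comm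
      _ ≤ ∑ a, ∑ i, (A' a i)^2 := Finset.sum_le_sum fun a _ => hbess a
  have hstrict : ∑ a : Fin m, ∑ i : Fin m, (A' a i)^2 < (k : ℝ) := by
    have hne : (Finset.univ : Finset (Fin m)).Nonempty := by
      rw [Finset.univ_nonempty_iff]
      exact ⟨⟨0, hmpos⟩⟩
    have hterm : ∀ a i : Fin m, (A' a i)^2 < ε^2 := by
      intro a i
      calc (A' a i)^2 = |A' a i|^2 := (sq_abs _).symm
        _ < ε^2 := by
            apply pow_lt_pow_left₀ (hentry_lt a i) (abs_nonneg _)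
            norm_num
    calc ∑ a : Fin m, ∑ i : Fin m, (A' a i)^2
        < ∑ a : Fin m, ∑ i : Fin m, ε^2 := by
          apply Finset.sum_lt_sum_of_nonempty hne
          intro a _
          exact Finset.sum_lt_sum_of_nonempty hne fun i _ => hterm a i
      _ = (m : ℝ)^2 * ε^2 := by
          simp [Finset.sum_const, sq]
          ring
      _ = (k : ℝ) := by
          rw [hε2, hm]
          push_cast
          field_simp
          ring
  have : (k : ℝ) ≤ (d : ℝ) := by exact_mod_cast hkd
  linarith
end
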